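/- Let D : X → (0,1) be measurable and let M ≥ 0 satisfy ∫_{A} (D_θ/D) dP₀ ≤ M · P₀(A) where A := {D_θ/D ≥ 25/16}. Then the Bernstein norm bound ‖(1/2) log(D/D_θ)‖²_{P₀,B} ≤ 2(1 + M) · h_θ(D, D_θ)² holds, i.e., 2 ∫ (e^{|(1/2)log(D/D_θ)|} − 1 − |(1/2)log(D/D_θ)|) dP₀ ≤ 2(1+M) ∫ (√D − √(D_θ))² d(P₀ + P_θ). -/

import Mathlib

open MeasureTheory Real ENNReal

section BernsteinAux

lemma log_lb {v : ℝ} (hv : 0 < v) : 2 - 2 / Real.sqrt v ≤ Real.log v := by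
  have hw : 0 < Real.sqrt v := Real.sqrt_pos.mpr hv
  have h1 : Real.log (Real.sqrt v)⁻¹ ≤ (Real.sqrt v)⁻¹ - 1 :=
    Real.log_le_sub_one_of_pos (inv_pos.mpr hw)
  rw [Real.log_inv, Real.log_sqrt hv.le, inv_eq_one_div] at h1
  have h4 : 2 / Real.sqrt v = 2 * (1 / Real.sqrt v) := by ring
  rw [h4]; linarith

private lemma polyPa {u : ℝ} (hu54 : 5/4 ≤ u^2) (hu212 : u^2 ≤ 25/12) (hu1 : 1 ≤ u) :
    25*u^6 - 75*u^4 + 50*u^3 ≤ u^8 - u^4 + 25*(u^2-1)^2 + (12*u^2-15)*u^4 := by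
  nlinarith [sq_nonneg (u-1), mul_nonneg (sub_nonneg.mpr hu54) (sub_nonneg.mpr hu212),
    sq_nonneg (u^2-5/4), sq_nonneg (u^2-25/12),
    mul_nonneg (mul_nonneg (sub_nonneg.mpr hu54) (sub_nonneg.mpr hu212)) (sq_nonneg u),
    sq_nonneg (u-5/4)]

private lemma polyPb {u : ℝ} (hu212 : 25/12 ≤ u^2) (hu1 : 1 ≤ u) :
    125*u^6 - 375*u^4 + 250*u^3 ≤ 5*u^8 - 5*u^4 + 125*(u^2-1)^2 + (48*u^2-50)*u^4 := by
  nlinarith [sq_nonneg (u^2 - 25/12), mul_nonneg (sub_nonneg.mpr hu212) (sub_nonneg.mpr hu1),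
    sq_nonneg (u-2), sq_nonneg (u^2-3*u),
    mul_nonneg (sub_nonneg.mpr hu212) (sq_nonneg (u-2)),
    mul_nonneg (sub_nonneg.mpr hu212) (sq_nonneg (u-3))]

lemma offtail_y {y : ℝ} (hy : 1 ≤ y) : y - 1 - Real.log y ≤ (y - 1)^2 := by
  have hy0 : 0 < y := lt_of_lt_of_le one_pos hy
  have h1 : Real.log y⁻¹ ≤ y⁻¹ - 1 := Real.log_le_sub_one_of_pos (inv_pos.mpr hy0)
  rw [Real.log_inv] at h1
  have hyy : y * y⁻¹ = 1 := mul_inv_cancel₀ (ne_of_gt hy0)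
  nlinarith [mul_nonneg (sub_nonneg.mpr hy) (sq_nonneg (y-1)), mul_pos hy0 (inv_pos.mpr hy0)]

lemma offtail_v {v : ℝ} (hv1 : 1 ≤ v) (hv2 : v^2 ≤ 25/16) : v - 1 - Real.log v ≤ (v⁻¹ - 1)^2 := by
  have hv0 : 0 < v := lt_of_lt_of_le one_pos hv1
  set u := Real.sqrt v with hu
  have hu0 : 0 < u := Real.sqrt_pos.mpr hv0
  have hu1 : 1 ≤ u := Real.one_le_sqrt.mpr hv1
  have huv : u^2 = v := Real.sq_sqrt hv0.le
  have hu2 : u^2 ≤ 5/4 := by nlinarith [sq_nonneg (u^2 - 5/4)]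
  have hlog := log_lb hv0
  have hpoly : u^3*(u+2) ≤ (u+1)^2 := by
    nlinarith [sq_nonneg (u-1), sq_nonneg u, mul_nonneg (sub_nonneg.mpr hu1) (sub_nonneg.mpr hu1)]
  have hvinv : v⁻¹ = 1/u^2 := by rw [huv]; exact inv_eq_one_div v
  rw [hvinv]
  have key : v - 1 - (2 - 2/u) ≤ (1/u^2 - 1)^2 := by
    rw [← huv]
    have e1 : u^2 - 1 - (2 - 2/u) = (u^6 - 3*u^4 + 2*u^3)/u^4 := by
      field_simp; ring
    have e2 : (1/u^2 - 1)^2 = ((u^2-1)^2)/u^4 := by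
      field_simp; ring
    rw [e1, e2]
    apply div_le_div_of_nonneg_right ?_ (by positivity)
    · nlinarith [hpoly]
  linarith

lemma tail_main {v : ℝ} (hv : 5/4 ≤ v) :
    25*(v - 1 - Real.log v) ≤ v^2 - 1 + 25*(v⁻¹ - 1)^2 + 2*Real.sqrt (24*v^2 - 50*v + 25) := by
  have hv0 : 0 < v := by linarith
  set u := Real.sqrt v with hu
  have hu0 : 0 < u := Real.sqrt_pos.mpr hv0
  have huv : u^2 = v := Real.sq_sqrt hv0.le
  have hu1 : 1 ≤ u := Real.one_le_sqrt.mpr (by linarith)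
  have hu54 : 5/4 ≤ u^2 := by rw [huv]; exact hv
  have hlog := log_lb hv0
  have hvinv : (v⁻¹ - 1)^2 = ((u^2-1)^2)/u^4 := by
    rw [← huv]; field_simp; ring
  have harg : 0 ≤ 24*v^2 - 50*v + 25 := by nlinarith
  set s := Real.sqrt (24*v^2 - 50*v + 25) with hs
  have hs0 : 0 ≤ s := Real.sqrt_nonneg _
  have hs2 : s^2 = 24*v^2 - 50*v + 25 := Real.sq_sqrt harg
  have key : 25*(v - 1 - (2 - 2/u)) ≤ v^2 - 1 + 25*(v⁻¹-1)^2 + 2*s := by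
    rcases le_total v (25/12) with hcase | hcase
    · have hlb : 6*v - 15/2 ≤ s := by
        nlinarith [hs2, hs0, sq_nonneg (s - (6*v-15/2))]
      have hu212 : u^2 ≤ 25/12 := by rw [huv]; exact hcase
      have hnum := polyPa hu54 hu212 hu1
      have hratio : 25*(v - 1 - (2 - 2/u)) ≤ v^2 - 1 + 25*(v⁻¹-1)^2 + 2*(6*v - 15/2) := by
        rw [hvinv, ← huv]
        rw [← sub_nonneg]
        have e1 : (u^2)^2 - 1 + 25*((u^2-1)^2/u^4) + 2*(6*u^2 - 15/2)
            - 25*(u^2 - 1 - (2 - 2/u))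
            = (u^8 - u^4 + 25*(u^2-1)^2 + (12*u^2-15)*u^4 - (25*u^6 - 75*u^4 + 50*u^3))/u^4 := by
          field_simp; ring
        rw [e1]
        exact div_nonneg (by linarith) (by positivity)
      linarith
    · have hlb : (24*v - 25)/5 ≤ s := by
        nlinarith [hs2, hs0, sq_nonneg (s - (24*v-25)/5)]
      have hu212 : 25/12 ≤ u^2 := by rw [huv]; exact hcase
      have hnum := polyPb hu212 hu1
      have hratio : 25*(v - 1 - (2 - 2/u)) ≤ v^2 - 1 + 25*(v⁻¹-1)^2 + 2*((24*v - 25)/5) := by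
        rw [hvinv, ← huv]
        rw [← sub_nonneg]
        have e1 : (u^2)^2 - 1 + 25*((u^2-1)^2/u^4) + 2*((24*u^2 - 25)/5)
            - 25*(u^2 - 1 - (2 - 2/u))
            = (5*u^8 - 5*u^4 + 125*(u^2-1)^2 + (48*u^2-50)*u^4 - (125*u^6 - 375*u^4 + 250*u^3))/(5*u^4) := by
          field_simp; ring
        rw [e1]
        exact div_nonneg (by linarith) (by positivity)
      linarith
  linarith [hlog]

lemma tail_M {v M : ℝ} (hv : 5/4 ≤ v) (hM : 0 ≤ M) :
    25*M*(v - 1 - Real.log v) + M*(1+M) ≤ 25*M*(1+M)*(v⁻¹ - 1)^2 + (1+M)*v^2 := by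
  have hv0 : 0 < v := by linarith
  have harg : 0 ≤ 24*v^2 - 50*v + 25 := by nlinarith
  set s := Real.sqrt (24*v^2 - 50*v + 25) with hs
  have hs0 : 0 ≤ s := Real.sqrt_nonneg _
  have hs2 : s^2 = 24*v^2 - 50*v + 25 := Real.sq_sqrt harg
  have hmain := tail_main hv
  set g := Real.log v with hg
  set t := (v⁻¹ - 1)^2 with ht
  have htv : t * v^2 = (v-1)^2 := by
    rw [ht]; field_simp; ring
  -- multiply main by M ≥ 0
  have hmainM : 25*M*(v - 1 - g) ≤ M*(v^2 - 1 + 25*t + 2*s) := by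
    nlinarith [mul_le_mul_of_nonneg_left hmain hM]
  -- key: M*(v^2-1+25t+2s) + M*(1+M) ≤ 25M(1+M)t + (1+M)v^2
  have key : M*(v^2 - 1 + 25*t + 2*s) + M*(1+M) ≤ 25*M*(1+M)*t + (1+M)*v^2 := by
    rw [← sub_nonneg]
    have expand : (25*M*(1+M)*t + (1+M)*v^2 - (M*(v^2 - 1 + 25*t + 2*s) + M*(1+M))) * v^2
        = (v^2 - M*s)^2 + M^2*(25*(t*v^2) - (s^2 + v^2)) := by ring
    have hsv : s^2 + v^2 = 25*(v-1)^2 := by rw [hs2]; ring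
    have hquad : 0 ≤ (25*M*(1+M)*t + (1+M)*v^2 - (M*(v^2 - 1 + 25*t + 2*s) + M*(1+M))) * v^2 := by
      rw [expand, htv, hsv]
      nlinarith [sq_nonneg (v^2 - M*s)]
    have hv2 : 0 < v^2 := by positivity
    nlinarith [hquad, hv2]
  linarith

lemma expG_ge {d θ : ℝ} (hθ : 0 < θ) (h : θ ≤ d) :
    Real.exp |1/2 * Real.log (d/θ)| - 1 - |1/2 * Real.log (d/θ)|
      = Real.sqrt (d/θ) - 1 - Real.log (Real.sqrt (d/θ)) := by
  have hr1 : 1 ≤ d/θ := (one_le_div hθ).mpr h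
  have hy1 : 1 ≤ Real.sqrt (d/θ) := Real.one_le_sqrt.mpr hr1
  have hlog : 1/2 * Real.log (d/θ) = Real.log (Real.sqrt (d/θ)) := by
    rw [Real.log_sqrt (by linarith : (0:ℝ) ≤ d/θ)]; ring
  rw [hlog, abs_of_nonneg (Real.log_nonneg hy1),
    Real.exp_log (by linarith : (0:ℝ) < Real.sqrt (d/θ))]

lemma expG_lt {d θ : ℝ} (hd : 0 < d) (hθ : 0 < θ) (h : d ≤ θ) :
    Real.exp |1/2 * Real.log (d/θ)| - 1 - |1/2 * Real.log (d/θ)|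
      = Real.sqrt (θ/d) - 1 - Real.log (Real.sqrt (θ/d)) := by
  have hr1 : 1 ≤ θ/d := (one_le_div hd).mpr h
  have hv1 : 1 ≤ Real.sqrt (θ/d) := Real.one_le_sqrt.mpr hr1
  have hinv : d/θ = (θ/d)⁻¹ := by rw [inv_div]
  have hlog : 1/2 * Real.log (d/θ) = - Real.log (Real.sqrt (θ/d)) := by
    rw [hinv, Real.log_inv, Real.log_sqrt (by linarith : (0:ℝ) ≤ θ/d)]; ring
  rw [hlog, abs_neg, abs_of_nonneg (Real.log_nonneg hv1),
    Real.exp_log (by linarith : (0:ℝ) < Real.sqrt (θ/d))]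

lemma sqrt_flip {d θ : ℝ} (hd : 0 < d) (hθ : 0 < θ) :
    Real.sqrt (d/θ) = (Real.sqrt (θ/d))⁻¹ := by
  rw [show d/θ = (θ/d)⁻¹ by rw [inv_div], Real.sqrt_inv]

lemma offtail_pt {d θ : ℝ} (hd : 0 < d) (hθ : 0 < θ) (hr : θ/d ≤ 25/16) :
    Real.exp |1/2 * Real.log (d/θ)| - 1 - |1/2 * Real.log (d/θ)| ≤ (Real.sqrt (d/θ) - 1)^2 := by
  rcases le_total θ d with hc | hc
  · rw [expG_ge hθ hc]
    exact offtail_y (Real.one_le_sqrt.mpr ((one_le_div hθ).mpr hc))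
  · rw [expG_lt hd hθ hc, sqrt_flip hd hθ]
    have hv1 : 1 ≤ Real.sqrt (θ/d) := Real.one_le_sqrt.mpr ((one_le_div hd).mpr hc)
    have hv2 : (Real.sqrt (θ/d))^2 ≤ 25/16 := by
      rw [Real.sq_sqrt (by positivity : (0:ℝ) ≤ θ/d)]; exact hr
    exact offtail_v hv1 hv2

lemma tail_pt {d θ M : ℝ} (hd : 0 < d) (hθ : 0 < θ) (hr : 25/16 ≤ θ/d) (hM : 0 ≤ M) :
    25*M*(Real.exp |1/2 * Real.log (d/θ)| - 1 - |1/2 * Real.log (d/θ)|) + M*(1+M)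
      ≤ 25*M*(1+M)*(Real.sqrt (d/θ) - 1)^2 + (1+M)*(θ/d) := by
  have hc : d ≤ θ := (one_le_div hd).mp (by linarith)
  rw [expG_lt hd hθ hc, sqrt_flip hd hθ]
  have hv2 : (Real.sqrt (θ/d))^2 = θ/d := Real.sq_sqrt (by positivity)
  have hv : 5/4 ≤ Real.sqrt (θ/d) := by
    have : Real.sqrt (25/16) ≤ Real.sqrt (θ/d) := Real.sqrt_le_sqrt hr
    have h2 : Real.sqrt (25/16) = 5/4 := by
      rw [show (25:ℝ)/16 = (5/4)^2 by norm_num, Real.sqrt_sq (by norm_num : (0:ℝ) ≤ 5/4)]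
    linarith
  have := tail_M (v := Real.sqrt (θ/d)) (M := M) hv hM
  rw [hv2] at this
  exact this

end BernsteinAux

/-- Under the tail condition on `D_θ/D`, the Bernstein-norm bound
`‖(1/2) log(D/D_θ)‖²_{P₀,B} ≤ 2(1 + M) h_θ(D, D_θ)²` holds. -/
theorem bernstein_norm_half_log_discriminator_ratio_le
    {X : Type*} [MeasurableSpace X] (μ : Measure X) [SigmaFinite μ]
    (p₀ pθ : X → ℝ) (hp₀ : Measurable p₀) (hpθ : Measurable pθ)
    (hp₀nn : ∀ x, 0 ≤ p₀ x) (hpθnn : ∀ x, 0 ≤ pθ x)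
    (hp₀den : ∫⁻ x, ENNReal.ofReal (p₀ x) ∂μ = 1)
    (hpθden : ∫⁻ x, ENNReal.ofReal (pθ x) ∂μ = 1)
    (P₀ Pθ : Measure X)
    (hP₀ : P₀ = μ.withDensity fun x => ENNReal.ofReal (p₀ x))
    (hPθ : Pθ = μ.withDensity fun x => ENNReal.ofReal (pθ x))
    (Dθ : X → ℝ) (hDθ : Measurable Dθ)
    (hDθ_def : ∀ x, 0 < p₀ x + pθ x → Dθ x = p₀ x / (p₀ x + pθ x))
    (D : X → ℝ) (hD : Measurable D) (hD_mem : ∀ x, 0 < D x ∧ D x < 1)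
    (M : ℝ) (hM : 0 ≤ M)
    (htail :
      (∫⁻ x in {x | 25 / 16 ≤ Dθ x / D x}, ENNReal.ofReal (Dθ x / D x) ∂P₀) ≤
        ENNReal.ofReal M * P₀ {x | 25 / 16 ≤ Dθ x / D x}) :
    2 * ∫⁻ x, ENNReal.ofReal
          (Real.exp |1 / 2 * Real.log (D x / Dθ x)| - 1 -
            |1 / 2 * Real.log (D x / Dθ x)|) ∂P₀ ≤
      ENNReal.ofReal (2 * (1 + M)) *
        ∫⁻ x, ENNReal.ofReal ((Real.sqrt (D x) - Real.sqrt (Dθ x)) ^ 2) ∂(P₀ + Pθ) := by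
  set G : X → ℝ := fun x => Real.exp |1 / 2 * Real.log (D x / Dθ x)| - 1 -
      |1 / 2 * Real.log (D x / Dθ x)| with hG
  set T : X → ℝ := fun x => (Real.sqrt (D x) - Real.sqrt (Dθ x)) ^ 2 with hT
  set T' : X → ℝ := fun x => (Real.sqrt (D x / Dθ x) - 1) ^ 2 with hT'
  set A : Set X := {x | 25 / 16 ≤ Dθ x / D x} with hA
  have hAm : MeasurableSet A := measurableSet_le measurable_const (hDθ.div hD)
  -- measurability
  have mlog : Measurable fun x => |1 / 2 * Real.log (D x / Dθ x)| :=
    (measurable_const.mul (hD.div hDθ).log).abs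
  have mG : Measurable G := (mlog.exp.sub measurable_const).sub mlog
  have mT' : Measurable T' := ((hD.div hDθ).sqrt.sub measurable_const).pow_const 2
  have mT : Measurable T := (hD.sqrt.sub hDθ.sqrt).pow_const 2
  have mratio : Measurable fun x => Dθ x / D x := hDθ.div hD
  -- P₀ is a probability-size measure
  have hP₀univ : P₀ Set.univ = 1 := by
    rw [hP₀, withDensity_apply _ MeasurableSet.univ, Measure.restrict_univ, hp₀den]
  have hP₀A_ne_top : P₀ A ≠ ∞ := by
    refine ne_top_of_le_ne_top ?_ (measure_mono (Set.subset_univ A))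
    rw [hP₀univ]; exact one_ne_top
  -- a.e. positivity of p₀
  have haep : ∀ᵐ x ∂P₀, 0 < p₀ x := by
    rw [ae_iff]
    have hS : MeasurableSet {x | ¬ 0 < p₀ x} := by
      simp only [not_lt]
      exact measurableSet_le hp₀ measurable_const
    rw [hP₀, withDensity_apply _ hS]
    have : ∀ᵐ x ∂(μ.restrict {x | ¬ 0 < p₀ x}), ENNReal.ofReal (p₀ x) = 0 := by
      filter_upwards [ae_restrict_mem hS] with x hx
      simp only [Set.mem_setOf_eq, not_lt] at hx
      exact ENNReal.ofReal_eq_zero.mpr hx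
    rw [lintegral_congr_ae this, lintegral_zero]
  have haeDθ : ∀ᵐ x ∂P₀, 0 < Dθ x := by
    filter_upwards [haep] with x hx
    have hsum : 0 < p₀ x + pθ x := by linarith [hpθnn x]
    rw [hDθ_def x hsum]
    exact div_pos hx hsum
  -- step 1 : ∫ T' dP₀ ≤ ∫ T d(P₀ + Pθ)
  have hstep1 : ∫⁻ x, ENNReal.ofReal (T' x) ∂P₀ ≤ ∫⁻ x, ENNReal.ofReal (T x) ∂(P₀ + Pθ) := by
    rw [lintegral_add_measure, hP₀, hPθ,
      lintegral_withDensity_eq_lintegral_mul μ hp₀.ennreal_ofReal mT'.ennreal_ofReal,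
      lintegral_withDensity_eq_lintegral_mul μ hp₀.ennreal_ofReal mT.ennreal_ofReal,
      lintegral_withDensity_eq_lintegral_mul μ hpθ.ennreal_ofReal mT.ennreal_ofReal,
      ← lintegral_add_left]
    · apply lintegral_mono
      intro x
      simp only [Pi.mul_apply]
      rcases le_or_gt (p₀ x) 0 with hp | hp
      · rw [ENNReal.ofReal_eq_zero.mpr hp, zero_mul]
        exact zero_le
      · have hsum : 0 < p₀ x + pθ x := by linarith [hpθnn x]
        have hθpos : 0 < Dθ x := by rw [hDθ_def x hsum]; exact div_pos hp hsum
        have hdpos : 0 < D x := (hD_mem x).1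
        have hTθ : T x = Dθ x * T' x := by
          simp only [hT, hT']
          rw [Real.sqrt_div hdpos.le]
          have hsθ : 0 < Real.sqrt (Dθ x) := Real.sqrt_pos.mpr hθpos
          have : Real.sqrt (D x) - Real.sqrt (Dθ x)
              = Real.sqrt (Dθ x) * (Real.sqrt (D x) / Real.sqrt (Dθ x) - 1) := by
            field_simp
          rw [this, mul_pow, Real.sq_sqrt hθpos.le]
        have hkey : p₀ x * T' x = (p₀ x + pθ x) * T x := by
          rw [hTθ, hDθ_def x hsum]
          field_simp
        have hT'nn : 0 ≤ T' x := sq_nonneg _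
        have hTnn : 0 ≤ T x := sq_nonneg _
        refine le_of_eq ?_
        calc ENNReal.ofReal (p₀ x) * ENNReal.ofReal (T' x)
            = ENNReal.ofReal (p₀ x * T' x) := (ENNReal.ofReal_mul (hp₀nn x)).symm
          _ = ENNReal.ofReal (p₀ x * T x + pθ x * T x) := by rw [hkey]; ring_nf
          _ = ENNReal.ofReal (p₀ x * T x) + ENNReal.ofReal (pθ x * T x) := by
              rw [ENNReal.ofReal_add (mul_nonneg (hp₀nn x) hTnn) (mul_nonneg (hpθnn x) hTnn)]
          _ = ENNReal.ofReal (p₀ x) * ENNReal.ofReal (T x)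
              + ENNReal.ofReal (pθ x) * ENNReal.ofReal (T x) := by
              rw [ENNReal.ofReal_mul (hp₀nn x), ENNReal.ofReal_mul (hpθnn x)]
    · exact hp₀.ennreal_ofReal.mul mT.ennreal_ofReal
  -- step 2 : off-tail
  have hoff : ∫⁻ x in Aᶜ, ENNReal.ofReal (G x) ∂P₀ ≤ ∫⁻ x in Aᶜ, ENNReal.ofReal (T' x) ∂P₀ := by
    apply lintegral_mono_ae
    filter_upwards [ae_restrict_of_ae haeDθ, ae_restrict_mem hAm.compl] with x hθx hmem
    apply ENNReal.ofReal_le_ofReal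
    have hr : Dθ x / D x ≤ 25/16 := le_of_not_ge hmem
    exact offtail_pt (hD_mem x).1 hθx hr
  -- step 3 : tail
  have htailA : ∫⁻ x in A, ENNReal.ofReal (G x) ∂P₀
      ≤ ENNReal.ofReal (1 + M) * ∫⁻ x in A, ENNReal.ofReal (T' x) ∂P₀ := by
    rcases eq_or_lt_of_le hM with hM0 | hMpos
    · -- M = 0 : P₀ A = 0
      have hPA : P₀ A = 0 := by
        have hge : ENNReal.ofReal (25/16) * P₀ A ≤ ∫⁻ x in A, ENNReal.ofReal (Dθ x / D x) ∂P₀ := by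
          rw [← setLIntegral_const A (ENNReal.ofReal (25/16))]
          apply lintegral_mono_ae
          filter_upwards [ae_restrict_mem hAm] with x hx
          exact ENNReal.ofReal_le_ofReal hx
        have : ENNReal.ofReal (25/16) * P₀ A ≤ 0 := by
          rw [← hM0] at htail
          simpa using le_trans hge htail
        have h2 : ENNReal.ofReal (25/16) * P₀ A = 0 := le_antisymm this zero_le
        rcases mul_eq_zero.mp h2 with h | h
        · exact absurd h (by norm_num [ENNReal.ofReal_eq_zero])
        · exact h
      rw [setLIntegral_measure_zero A _ hPA]
      exact zero_le
    · -- M > 0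
      have hMne : (0:ℝ) < M := hMpos
      have hptwise : ∀ᵐ x ∂P₀.restrict A,
          ENNReal.ofReal (25*M) * ENNReal.ofReal (G x) + ENNReal.ofReal (M*(1+M))
            ≤ ENNReal.ofReal (25*M*(1+M)) * ENNReal.ofReal (T' x)
              + ENNReal.ofReal (1+M) * ENNReal.ofReal (Dθ x / D x) := by
        filter_upwards [ae_restrict_of_ae haeDθ, ae_restrict_mem hAm] with x hθx hmem
        have hr : 25/16 ≤ Dθ x / D x := hmem
        have hreal := tail_pt (hD_mem x).1 hθx hr hM
        have hGnn : 0 ≤ G x := by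
          simp only [hG]
          have := Real.add_one_le_exp |1 / 2 * Real.log (D x / Dθ x)|
          linarith
        calc ENNReal.ofReal (25*M) * ENNReal.ofReal (G x) + ENNReal.ofReal (M*(1+M))
            = ENNReal.ofReal (25*M*(G x) + M*(1+M)) := by
              rw [ENNReal.ofReal_add (by positivity) (by positivity)]
              congr 1
              exact (ENNReal.ofReal_mul (by positivity)).symm
          _ ≤ ENNReal.ofReal (25*M*(1+M)*(T' x) + (1+M)*(Dθ x / D x)) := by
              apply ENNReal.ofReal_le_ofReal
              convert hreal using 2 <;> simp [hG, hT']
          _ = ENNReal.ofReal (25*M*(1+M)) * ENNReal.ofReal (T' x)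
              + ENNReal.ofReal (1+M) * ENNReal.ofReal (Dθ x / D x) := by
              have hratio_nn : 0 ≤ Dθ x / D x := le_trans (by norm_num) hr
              rw [ENNReal.ofReal_add (by positivity) (by positivity)]
              congr 1
              · exact ENNReal.ofReal_mul (by positivity)
              · exact ENNReal.ofReal_mul (by positivity)
      have hint := lintegral_mono_ae hptwise
      rw [lintegral_add_right _ measurable_const,
        lintegral_add_left ((mT'.ennreal_ofReal).const_mul _),
        lintegral_const_mul _ mG.ennreal_ofReal,
        lintegral_const_mul _ mT'.ennreal_ofReal,
        lintegral_const_mul _ mratio.ennreal_ofReal,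
        lintegral_const] at hint
      simp only [Measure.restrict_apply_univ] at hint
      -- use htail
      have hbound : ENNReal.ofReal (1+M) * ∫⁻ x in A, ENNReal.ofReal (Dθ x / D x) ∂P₀
          ≤ ENNReal.ofReal (M*(1+M)) * P₀ A := by
        calc ENNReal.ofReal (1+M) * ∫⁻ x in A, ENNReal.ofReal (Dθ x / D x) ∂P₀
            ≤ ENNReal.ofReal (1+M) * (ENNReal.ofReal M * P₀ A) := by
              exact mul_le_mul_right htail _
          _ = ENNReal.ofReal (M*(1+M)) * P₀ A := by
              rw [← mul_assoc]
              congr 1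
              rw [← ENNReal.ofReal_mul (by linarith : (0:ℝ) ≤ 1+M)]
              congr 1
              ring
      have hcomb : ENNReal.ofReal (25*M) * ∫⁻ x in A, ENNReal.ofReal (G x) ∂P₀
            + ENNReal.ofReal (M*(1+M)) * P₀ A
          ≤ ENNReal.ofReal (25*M*(1+M)) * ∫⁻ x in A, ENNReal.ofReal (T' x) ∂P₀
            + ENNReal.ofReal (M*(1+M)) * P₀ A :=
        le_trans hint (add_le_add_right hbound _)
      have hcancel := (ENNReal.add_le_add_iff_right
        (mul_ne_top ENNReal.ofReal_ne_top hP₀A_ne_top)).mp hcomb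
      have hsplitc : ENNReal.ofReal (25*M*(1+M)) = ENNReal.ofReal (25*M) * ENNReal.ofReal (1+M) :=
        ENNReal.ofReal_mul (by positivity)
      have hfactor : ENNReal.ofReal (25*M*(1+M)) * ∫⁻ x in A, ENNReal.ofReal (T' x) ∂P₀
          = ENNReal.ofReal (25*M) * (ENNReal.ofReal (1+M) * ∫⁻ x in A, ENNReal.ofReal (T' x) ∂P₀) := by
        rw [hsplitc, mul_assoc]
      rw [hfactor] at hcancel
      refine (ENNReal.mul_le_mul_iff_right ?_ ENNReal.ofReal_ne_top).mp hcancel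
      rw [Ne, ENNReal.ofReal_eq_zero, not_le]
      linarith
  -- combine
  have hG_le : ∫⁻ x, ENNReal.ofReal (G x) ∂P₀
      ≤ ENNReal.ofReal (1 + M) * ∫⁻ x, ENNReal.ofReal (T' x) ∂P₀ := by
    rw [← lintegral_add_compl (fun x => ENNReal.ofReal (G x)) hAm,
      ← lintegral_add_compl (fun x => ENNReal.ofReal (T' x)) hAm, mul_add]
    have h1M : (1:ℝ≥0∞) ≤ ENNReal.ofReal (1+M) := ENNReal.one_le_ofReal.mpr (by linarith)
    refine add_le_add htailA (le_trans hoff ?_)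
    calc ∫⁻ x in Aᶜ, ENNReal.ofReal (T' x) ∂P₀
        = 1 * ∫⁻ x in Aᶜ, ENNReal.ofReal (T' x) ∂P₀ := (one_mul _).symm
      _ ≤ ENNReal.ofReal (1+M) * ∫⁻ x in Aᶜ, ENNReal.ofReal (T' x) ∂P₀ :=
          mul_le_mul_left h1M _
  -- finish
  have hfin : ENNReal.ofReal (2*(1+M)) = 2 * ENNReal.ofReal (1+M) := by
    rw [ENNReal.ofReal_mul (by norm_num)]
    norm_num
  rw [hfin, mul_assoc]
  exact mul_le_mul_right (le_trans hG_le (mul_le_mul_right hstep1 _)) 2
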